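/- Fix α > 1, č > √2 with (as real numbers) √((1+δ')/(1−δ')) < č/α − 1 for some δ' ∈ (0,1), and let δ̃ ≤ 1/(č√s). Let r ∈ ℂ^N with ||r||₂ > 0, and suppose energy estimates E_ñ satisfy (1−δ')(max{0, ||r_{(ñ)}||₂ − δ̃||r||₂})² ≤ E_ñ ≤ (1+δ')(||r_{(ñ)}||₂ + δ̃||r||₂)². Then whenever ||r_{(ñ)}||₂ = 0 and ||r_{(ñ')}||₂² ≥ ||r||₂²/(α²s), one has E_ñ < E_{ñ'}. In other words, the estimator strictly separates zero-energy prefixes from prefixes of energy at least ||r||₂²/(α²s). -/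

import Mathlib

/-- Separation of energy estimates: if the estimates `E ñ` satisfy the two-sided RIP-based
bounds, then every prefix with zero energy receives a strictly smaller estimate than any
prefix with energy at least `‖r‖₂²/(α²s)`. -/
theorem stmt15 (I : Type) (s : ℕ) (hs : 1 ≤ s)
    (α c δ' δt R : ℝ)
    (hα : 1 < α) (hc : Real.sqrt 2 < c)
    (hδ'0 : 0 < δ') (hδ'1 : δ' < 1)
    (hsep : Real.sqrt ((1 + δ') / (1 - δ')) < c / α - 1)
    (hδt0 : 0 ≤ δt) (hδt : δt ≤ 1 / (c * Real.sqrt s))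
    (hR : 0 < R)
    (nr : I → ℝ) (hnr : ∀ i, 0 ≤ nr i)
    (E : I → ℝ)
    (hE : ∀ i, (1 - δ') * (max 0 (nr i - δt * R)) ^ 2 ≤ E i ∧
               E i ≤ (1 + δ') * (nr i + δt * R) ^ 2) :
    ∀ i i' : I, nr i = 0 → R ^ 2 / (α ^ 2 * s) ≤ (nr i') ^ 2 → E i < E i' := by
  intro i i' hzero hbig
  set t := Real.sqrt s with ht_def
  have hs0 : (0:ℝ) < (s:ℝ) := by exact_mod_cast Nat.lt_of_lt_of_le Nat.zero_lt_one hs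
  have ht0 : 0 < t := Real.sqrt_pos.mpr hs0
  have ht2 : t ^ 2 = (s:ℝ) := Real.sq_sqrt hs0.le
  have hc0 : (0:ℝ) < c := lt_trans (Real.sqrt_pos.mpr (by norm_num)) hc
  have hα0 : (0:ℝ) < α := lt_trans one_pos hα
  have h1δ : 0 < 1 - δ' := by linarith
  set q := Real.sqrt ((1 + δ') / (1 - δ')) with hq_def
  have hq0 : 0 ≤ q := Real.sqrt_nonneg _
  have hq2 : q ^ 2 = (1 + δ') / (1 - δ') := Real.sq_sqrt (div_nonneg (by linarith) h1δ.le)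
  have hq2' : (1 - δ') * q ^ 2 = 1 + δ' := by
    rw [hq2]; field_simp
  set A := R / (c * t) with hA_def
  have hA0 : 0 < A := by positivity
  -- upper bound on E i
  have hδtR : δt * R ≤ A := by
    rw [hA_def]
    calc δt * R ≤ (1 / (c * t)) * R := by
          exact mul_le_mul_of_nonneg_right hδt hR.le
      _ = R / (c * t) := by ring
  have hEi : E i ≤ (1 + δ') * A ^ 2 := by
    have h := (hE i).2
    rw [hzero] at h
    have : (0 + δt * R) ^ 2 ≤ A ^ 2 := by
      rw [zero_add]; exact pow_le_pow_left₀ (by positivity) hδtR 2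
    nlinarith
  -- lower bound on nr i'
  have hni' : R / (α * t) ≤ nr i' := by
    have h1 : (R / (α * t)) ^ 2 ≤ (nr i') ^ 2 := by
      have : (R / (α * t)) ^ 2 = R ^ 2 / (α ^ 2 * s) := by
        rw [← ht2]; field_simp
      linarith [this ▸ hbig]
    have := Real.sqrt_le_sqrt h1
    rwa [Real.sqrt_sq (by positivity), Real.sqrt_sq (hnr i')] at this
  -- B = A * (c/α - 1)
  set B := A * (c / α - 1) with hB_def
  have hBeq : B = R / (α * t) - A := by
    rw [hB_def, hA_def]; field_simp
  have hcα0 : 0 < c / α - 1 := lt_of_le_of_lt hq0 hsep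
  have hB0 : 0 < B := mul_pos hA0 hcα0
  have hBle : B ≤ nr i' - δt * R := by
    rw [hBeq]; linarith
  have hEi' : (1 - δ') * B ^ 2 ≤ E i' := by
    have h := (hE i').1
    have hmax : B ≤ max 0 (nr i' - δt * R) := le_trans hBle (le_max_right _ _)
    have : B ^ 2 ≤ (max 0 (nr i' - δt * R)) ^ 2 := pow_le_pow_left₀ hB0.le hmax 2
    nlinarith
  -- final comparison
  have hqA : q * A < B := by
    rw [hB_def]
    calc q * A < (c / α - 1) * A := by
          exact mul_lt_mul_of_pos_right hsep hA0
      _ = A * (c / α - 1) := by ring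
  have hfin : (1 + δ') * A ^ 2 < (1 - δ') * B ^ 2 := by
    have h1 : (q * A) ^ 2 < B ^ 2 :=
      pow_lt_pow_left₀ hqA (mul_nonneg hq0 hA0.le) (by norm_num)
    have h2 : (1 + δ') * A ^ 2 = (1 - δ') * (q * A) ^ 2 := by
      linear_combination A ^ 2 * hq2'.symm
    rw [h2]
    exact mul_lt_mul_of_pos_left h1 h1δ
  linarith
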